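/- Let 0 ≤ α < n, let 𝒟 be a dyadic grid on ℝⁿ, let I ∈ 𝒟, and for k ≥ 1 let A_k := π^{(k)}I be the k-fold dyadic parent of I, so that ℓ(A_k) = 2^k ℓ(I) and I ⊆ A_k. Then for every positive locally finite Borel measure ω on ℝⁿ: Σ_{k=1}^∞ [ℓ(I)^{n−α} / ℓ(A_k)^{2(n−α)}] · ω(A_k ∖ I) ≤ C · 𝒫^α(I, 1_{ℝⁿ∖I} ω), where C depends only on n and α. -/

import Mathlib

open MeasureTheory
open scoped ENNReal NNReal

noncomputable section

/-- An axis-parallel half-open cube in `ℝⁿ`, given by its corner `a` and side length `l`. -/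
structure QCube (n : ℕ) where
  a : Fin n → ℝ
  l : ℝ

/-- The half-open cube as a subset of `ℝⁿ`. -/
def QCube.pts {n : ℕ} (Q : QCube n) : Set (EuclideanSpace ℝ (Fin n)) :=
  {x | ∀ i, Q.a i ≤ x i ∧ x i < Q.a i + Q.l}

/-- The center of a cube. -/
def QCube.center {n : ℕ} (Q : QCube n) : EuclideanSpace ℝ (Fin n) :=
  (EuclideanSpace.equiv (Fin n) ℝ).symm fun i => Q.a i + Q.l / 2

/-- The dyadic grid on `ℝⁿ` obtained by translating the standard grid by `t`. -/
def dyadicGrid {n : ℕ} (t : Fin n → ℝ) : Set (QCube n) :=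
  {Q | ∃ (k : ℤ) (m : Fin n → ℤ),
    Q = ⟨fun i => t i + (2:ℝ) ^ (-k) * (m i : ℝ), (2:ℝ) ^ (-k)⟩}

/-- The reproducing `α`-fractional Poisson integral
`𝒫^α(Q,μ) = ∫ (ℓ(Q)/(ℓ(Q)+|x−c_Q|)²)^{n−α} dμ(x)`, with side `t` and center `z`. -/
def reproPoisson {n : ℕ} (α t : ℝ) (z : EuclideanSpace ℝ (Fin n))
    (μ : Measure (EuclideanSpace ℝ (Fin n))) : ℝ≥0∞ :=
  ∫⁻ x, ENNReal.ofReal ((t / (t + dist x z) ^ 2) ^ ((n : ℝ) - α)) ∂μ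

/- ### Auxiliary lemmas -/

lemma measurableSet_pts {n : ℕ} (Q : QCube n) : MeasurableSet Q.pts := by
  have : Q.pts = ⋂ i, {x : EuclideanSpace ℝ (Fin n) | Q.a i ≤ x i ∧ x i < Q.a i + Q.l} := by
    ext x; simp [QCube.pts, Set.mem_iInter]
  rw [this]
  refine MeasurableSet.iInter fun i => ?_
  have hm : Measurable fun x : EuclideanSpace ℝ (Fin n) => x i := by
    exact (EuclideanSpace.proj i : EuclideanSpace ℝ (Fin n) →L[ℝ] ℝ).continuous.measurable
  exact (measurableSet_le measurable_const hm).inter (measurableSet_lt hm measurable_const)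

lemma center_mem_pts {n : ℕ} (Q : QCube n) (hl : 0 < Q.l) : Q.center ∈ Q.pts := by
  intro i
  show Q.a i ≤ Q.a i + Q.l / 2 ∧ Q.a i + Q.l / 2 < Q.a i + Q.l
  constructor <;> linarith

lemma dist_le_of_mem {n : ℕ} (Q : QCube n) (hl : 0 ≤ Q.l) {x y : EuclideanSpace ℝ (Fin n)}
    (hx : x ∈ Q.pts) (hy : y ∈ Q.pts) : dist x y ≤ Real.sqrt n * Q.l := by
  rw [EuclideanSpace.dist_eq]
  have h1 : ∀ i, dist (x i) (y i) ^ 2 ≤ Q.l ^ 2 := by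
    intro i
    obtain ⟨ha1, ha2⟩ := hx i
    obtain ⟨ha3, ha4⟩ := hy i
    rw [Real.dist_eq]
    have habs : |x i - y i| ≤ Q.l := abs_le.2 ⟨by linarith, by linarith⟩
    exact pow_le_pow_left₀ (abs_nonneg _) habs 2
  calc Real.sqrt (∑ i, dist (x i) (y i) ^ 2)
      ≤ Real.sqrt (∑ _i : Fin n, Q.l ^ 2) :=
        Real.sqrt_le_sqrt (Finset.sum_le_sum fun i _ => h1 i)
    _ = Real.sqrt ((n : ℝ) * Q.l ^ 2) := by
        rw [Finset.sum_const, Finset.card_univ, Fintype.card_fin, nsmul_eq_mul]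
    _ = Real.sqrt n * Q.l := by
        rw [Real.sqrt_mul (by positivity), Real.sqrt_sq hl]

lemma pow_rpow_comm (x : ℝ) (hx : 0 ≤ x) (y : ℝ) (k : ℕ) : (x ^ y) ^ k = (x ^ k) ^ y := by
  rw [← Real.rpow_natCast (x ^ y) k, ← Real.rpow_natCast x k, ← Real.rpow_mul hx,
    ← Real.rpow_mul hx, mul_comm]

lemma coeff_eq (β ℓ : ℝ) (hℓ : 0 < ℓ) (k : ℕ) :
    ℓ ^ β / ((2:ℝ) ^ k * ℓ) ^ (2 * β) = ((4:ℝ) ^ (-β)) ^ k * ℓ ^ (-β) := by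
  have hbase : (0:ℝ) ≤ 2 ^ k * ℓ := by positivity
  have h1 : ((2:ℝ) ^ k * ℓ) ^ (2 * β) = (((2:ℝ) ^ k * ℓ) ^ 2) ^ β := by
    rw [Real.rpow_mul hbase, Real.rpow_two]
  have h2 : (((2:ℝ) ^ k * ℓ) ^ 2 : ℝ) = (4:ℝ) ^ k * ℓ ^ 2 := by
    rw [mul_pow, pow_right_comm]; norm_num
  calc ℓ ^ β / ((2:ℝ) ^ k * ℓ) ^ (2 * β)
      = ℓ ^ β / ((4:ℝ) ^ k * ℓ ^ 2) ^ β := by rw [h1, h2]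
    _ = (ℓ / ((4:ℝ) ^ k * ℓ ^ 2)) ^ β := (Real.div_rpow hℓ.le (by positivity) β).symm
    _ = (((4:ℝ) ^ k * ℓ)⁻¹) ^ β := by
        rw [show ℓ / ((4:ℝ) ^ k * ℓ ^ 2) = ((4:ℝ) ^ k * ℓ)⁻¹ from by field_simp; try ring]
    _ = ((4:ℝ) ^ k * ℓ) ^ (-β) := by
        rw [Real.inv_rpow (by positivity), Real.rpow_neg (by positivity)]
    _ = ((4:ℝ) ^ (-β)) ^ k * ℓ ^ (-β) := by
        rw [Real.mul_rpow (by positivity) hℓ.le, ← pow_rpow_comm 4 (by norm_num)]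

lemma kernel_lb (n : ℕ) (hn : 1 ≤ n) (β ℓ d : ℝ) (hβ : 0 < β) (hℓ : 0 < ℓ) (hd : 0 ≤ d)
    (k : ℕ) (hk : 1 ≤ k) (hdle : d ≤ Real.sqrt n * ((2:ℝ) ^ k * ℓ)) :
    ((4:ℝ) ^ (-β)) ^ k * ℓ ^ (-β) ≤ ((4:ℝ) * n) ^ β * (ℓ / (ℓ + d) ^ 2) ^ β := by
  have hn0 : (1:ℝ) ≤ n := by exact_mod_cast hn
  have hsn : 1 ≤ Real.sqrt n := by
    rw [show (1:ℝ) = Real.sqrt 1 by simp]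
    exact Real.sqrt_le_sqrt hn0
  have h2k : (2:ℝ) ≤ 2 ^ k := by
    calc (2:ℝ) = 2 ^ 1 := by norm_num
    _ ≤ 2 ^ k := pow_le_pow_right₀ one_le_two hk
  have h1 : (2:ℝ) ≤ Real.sqrt n * 2 ^ k := by
    calc (2:ℝ) = 1 * 2 := by norm_num
    _ ≤ Real.sqrt n * 2 ^ k := mul_le_mul hsn h2k (by norm_num) (le_trans zero_le_one hsn)
  have h1l : 2 * ℓ ≤ Real.sqrt n * 2 ^ k * ℓ := by nlinarith
  have hld : ℓ + d ≤ 2 * Real.sqrt n * 2 ^ k * ℓ := by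
    have := hdle
    nlinarith
  have hs2 : Real.sqrt n ^ 2 = n := Real.sq_sqrt (by linarith)
  have h4k : ((2:ℝ) ^ k) ^ 2 = 4 ^ k := by rw [pow_right_comm]; norm_num
  have hsq : (ℓ + d) ^ 2 ≤ 4 * n * 4 ^ k * ℓ ^ 2 := by
    calc (ℓ + d) ^ 2 ≤ (2 * Real.sqrt n * 2 ^ k * ℓ) ^ 2 :=
          pow_le_pow_left₀ (by linarith) hld 2
      _ = 4 * (Real.sqrt n ^ 2) * ((2 ^ k) ^ 2) * ℓ ^ 2 := by ring
      _ = 4 * n * 4 ^ k * ℓ ^ 2 := by rw [hs2, h4k]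
  have hdiv : ℓ / (4 * (n:ℝ) * 4 ^ k * ℓ ^ 2) ≤ ℓ / (ℓ + d) ^ 2 := by
    gcongr
  have key : ((4:ℝ) * n * 4 ^ k * ℓ) ^ (-β) ≤ (ℓ / (ℓ + d) ^ 2) ^ β := by
    have h0 : (0:ℝ) < 4 * n * 4 ^ k * ℓ := by positivity
    calc ((4:ℝ) * n * 4 ^ k * ℓ) ^ (-β)
        = (ℓ / (4 * (n:ℝ) * 4 ^ k * ℓ ^ 2)) ^ β := by
          rw [show ℓ / (4 * (n:ℝ) * 4 ^ k * ℓ ^ 2) = ((4:ℝ) * n * 4 ^ k * ℓ)⁻¹ from by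
            field_simp; try ring]
          rw [Real.inv_rpow h0.le, Real.rpow_neg h0.le]
      _ ≤ (ℓ / (ℓ + d) ^ 2) ^ β := Real.rpow_le_rpow (by positivity) hdiv hβ.le
  have expand : ((4:ℝ) * n * 4 ^ k * ℓ) ^ (-β)
      = ((4:ℝ) * n) ^ (-β) * ((4:ℝ) ^ (-β)) ^ k * ℓ ^ (-β) := by
    rw [Real.mul_rpow (by positivity) hℓ.le, Real.mul_rpow (by positivity) (by positivity),
      ← pow_rpow_comm 4 (by norm_num)]
  have h4n : ((4:ℝ) * n) ^ β * ((4:ℝ) * n) ^ (-β) = 1 := by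
    rw [← Real.rpow_add (by positivity)]; simp
  calc ((4:ℝ) ^ (-β)) ^ k * ℓ ^ (-β)
      = ((4:ℝ) * n) ^ β * (((4:ℝ) * n) ^ (-β) * ((4:ℝ) ^ (-β)) ^ k * ℓ ^ (-β)) := by
        rw [show ((4:ℝ)*n) ^ β * (((4:ℝ)*n) ^ (-β) * ((4:ℝ) ^ (-β)) ^ k * ℓ ^ (-β))
          = (((4:ℝ)*n) ^ β * ((4:ℝ)*n) ^ (-β)) * (((4:ℝ) ^ (-β)) ^ k * ℓ ^ (-β)) from by ring,
          h4n, one_mul]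
    _ = ((4:ℝ) * n) ^ β * (((4:ℝ) * n * 4 ^ k * ℓ) ^ (-β)) := by rw [expand]
    _ ≤ ((4:ℝ) * n) ^ β * (ℓ / (ℓ + d) ^ 2) ^ β :=
        mul_le_mul_of_nonneg_left key (by positivity)

/-- For `I ∈ 𝒟` with `k`-fold dyadic parents `A_k = π^{(k)}I`:
`Σ_{k=1}^∞ [ℓ(I)^{n−α}/ℓ(A_k)^{2(n−α)}] ω(A_k ∖ I) ≤ C 𝒫^α(I, 1_{ℝⁿ∖I}ω)`,
with `C` depending only on `n` and `α`. -/
theorem statement17 (n : ℕ) (α : ℝ) (hn : 1 ≤ n) (hα0 : 0 ≤ α) (hαn : α < n) :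
    ∃ C : ℝ, 0 < C ∧
      ∀ (t : Fin n → ℝ) (I : QCube n), I ∈ dyadicGrid t →
      ∀ A : ℕ → QCube n,
        (∀ k : ℕ, A k ∈ dyadicGrid t ∧ I.pts ⊆ (A k).pts ∧ (A k).l = 2 ^ k * I.l) →
      ∀ ω : Measure (EuclideanSpace ℝ (Fin n)), IsLocallyFiniteMeasure ω →
        (∑' k : ℕ,
            ENNReal.ofReal (I.l ^ ((n : ℝ) - α) / (A (k + 1)).l ^ (2 * ((n : ℝ) - α)))
              * ω ((A (k + 1)).pts \ I.pts))
          ≤ ENNReal.ofReal C * reproPoisson α I.l I.center (ω.restrict I.ptsᶜ) := by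
  classical
  set β := (n : ℝ) - α with hβdef
  have hβ : 0 < β := sub_pos.2 hαn
  have hn0 : (1:ℝ) ≤ n := by exact_mod_cast hn
  have h4β : (0:ℝ) < (4:ℝ) ^ (-β) := Real.rpow_pos_of_pos (by norm_num) _
  have h4β1 : (4:ℝ) ^ (-β) < 1 :=
    Real.rpow_lt_one_of_one_lt_of_neg (by norm_num) (by linarith)
  have h4npos : (0:ℝ) < ((4:ℝ) * n) ^ β := Real.rpow_pos_of_pos (by positivity) _
  refine ⟨((4:ℝ) * n) ^ β * (1 - (4:ℝ) ^ (-β))⁻¹,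
    mul_pos h4npos (inv_pos.2 (by linarith)), ?_⟩
  intro t I hI A hA ω _
  obtain ⟨k0, m0, hIeq⟩ := hI
  have hℓ : 0 < I.l := by
    rw [hIeq]
    exact zpow_pos (by norm_num) _
  set c := I.center with hc
  set ω' := ω.restrict I.ptsᶜ with hω'
  set D : ℕ → Set (EuclideanSpace ℝ (Fin n)) := fun k => (A (k + 1)).pts \ I.pts with hDdef
  have hDm : ∀ k, MeasurableSet (D k) :=
    fun k => (measurableSet_pts _).diff (measurableSet_pts I)
  have hωD : ∀ k, ω (D k) = ω' (D k) := by
    intro k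
    rw [hω', Measure.restrict_apply (hDm k)]
    congr 1
    exact (Set.inter_eq_left.2 fun x hx => hx.2).symm
  set kern : EuclideanSpace ℝ (Fin n) → ℝ≥0∞ :=
    fun x => ENNReal.ofReal ((I.l / (I.l + dist x c) ^ 2) ^ β) with hkern
  set r : ℝ≥0∞ := ENNReal.ofReal ((4:ℝ) ^ (-β)) with hr
  set L : ℝ≥0∞ := ENNReal.ofReal (I.l ^ (-β)) with hL
  set C : ℝ := ((4:ℝ) * n) ^ β * (1 - (4:ℝ) ^ (-β))⁻¹ with hC
  have h1r : (1 - r)⁻¹ = ENNReal.ofReal ((1 - (4:ℝ) ^ (-β))⁻¹) := by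
    rw [ENNReal.ofReal_inv_of_pos (by linarith), ENNReal.ofReal_sub _ h4β.le,
      ENNReal.ofReal_one]
  -- the pointwise claim
  have claim : ∀ x,
      (∑' k : ℕ, (D k).indicator
        (fun _ => ENNReal.ofReal (I.l ^ β / (A (k + 1)).l ^ (2 * β))) x)
      ≤ ENNReal.ofReal C * kern x := by
    intro x
    by_cases hxI : x ∈ I.pts
    · have hz : ∀ k : ℕ, x ∉ D k := fun k hk => hk.2 hxI
      rw [tsum_congr (fun k => Set.indicator_of_notMem (hz k) _)]
      simp
    · by_cases hS : ∃ k, x ∈ (A (k + 1)).pts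
      · set m := Nat.find hS with hm
        have hxm : x ∈ (A (m + 1)).pts := Nat.find_spec hS
        have hterm : ∀ k : ℕ,
            (D k).indicator (fun _ => ENNReal.ofReal (I.l ^ β / (A (k + 1)).l ^ (2 * β))) x
            ≤ if m ≤ k then r ^ (k + 1) * L else 0 := by
          intro k
          by_cases hk : x ∈ D k
          · rw [Set.indicator_of_mem hk, if_pos (Nat.find_min' hS hk.1)]
            rw [(hA (k + 1)).2.2, coeff_eq β I.l hℓ (k + 1),
              ENNReal.ofReal_mul (by positivity), ENNReal.ofReal_pow h4β.le]
          · rw [Set.indicator_of_notMem hk]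
            exact zero_le
        have hkey : r ^ (m + 1) * L ≤ ENNReal.ofReal (((4:ℝ) * n) ^ β) * kern x := by
          have hd : dist x c ≤ Real.sqrt n * ((2:ℝ) ^ (m + 1) * I.l) := by
            have hlA : (A (m + 1)).l = 2 ^ (m + 1) * I.l := (hA (m + 1)).2.2
            have hcA : c ∈ (A (m + 1)).pts := (hA (m + 1)).2.1 (center_mem_pts I hℓ)
            have := dist_le_of_mem (A (m + 1)) (by rw [hlA]; positivity) hxm hcA
            rwa [hlA] at this
          have hlb := kernel_lb n hn β I.l (dist x c) hβ hℓ dist_nonneg (m + 1)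
            (Nat.le_add_left 1 m) hd
          calc r ^ (m + 1) * L
              = ENNReal.ofReal (((4:ℝ) ^ (-β)) ^ (m + 1) * I.l ^ (-β)) := by
                rw [ENNReal.ofReal_mul (by positivity), ENNReal.ofReal_pow h4β.le]
            _ ≤ ENNReal.ofReal (((4:ℝ) * n) ^ β * (I.l / (I.l + dist x c) ^ 2) ^ β) :=
                ENNReal.ofReal_le_ofReal hlb
            _ = ENNReal.ofReal (((4:ℝ) * n) ^ β) * kern x := by
                rw [ENNReal.ofReal_mul h4npos.le]
        calc (∑' k : ℕ, (D k).indicator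
              (fun _ => ENNReal.ofReal (I.l ^ β / (A (k + 1)).l ^ (2 * β))) x)
            ≤ ∑' k : ℕ, if m ≤ k then r ^ (k + 1) * L else 0 :=
              ENNReal.tsum_le_tsum hterm
          _ = ∑' j : ℕ, (if m ≤ m + j then r ^ (m + j + 1) * L else 0) := by
              refine (Function.Injective.tsum_eq (fun a b h => by omega) ?_).symm
              intro k hk
              by_cases hmk : m ≤ k
              · exact ⟨k - m, by omega⟩
              · simp [if_neg hmk] at hk
          _ = ∑' j : ℕ, (r ^ (m + 1) * L) * r ^ j := by
              refine tsum_congr fun j => ?_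
              rw [if_pos (Nat.le_add_right m j), show m + j + 1 = (m + 1) + j by omega,
                pow_add]
              ring
          _ = (r ^ (m + 1) * L) * ∑' j : ℕ, r ^ j := ENNReal.tsum_mul_left
          _ = (r ^ (m + 1) * L) * (1 - r)⁻¹ := by rw [ENNReal.tsum_geometric]
          _ ≤ (ENNReal.ofReal (((4:ℝ) * n) ^ β) * kern x) * (1 - r)⁻¹ :=
              mul_le_mul_left hkey _
          _ = ENNReal.ofReal C * kern x := by
              rw [h1r, hC, ENNReal.ofReal_mul h4npos.le]
              ring
      · push_neg at hS
        have hz : ∀ k : ℕ, x ∉ D k := fun k hk => hS k hk.1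
        rw [tsum_congr (fun k => Set.indicator_of_notMem (hz k) _)]
        simp
  -- assemble
  calc (∑' k : ℕ,
          ENNReal.ofReal (I.l ^ β / (A (k + 1)).l ^ (2 * β)) * ω ((A (k + 1)).pts \ I.pts))
      = ∑' k : ℕ, ∫⁻ x, (D k).indicator
          (fun _ => ENNReal.ofReal (I.l ^ β / (A (k + 1)).l ^ (2 * β))) x ∂ω' := by
        refine tsum_congr fun k => ?_
        rw [lintegral_indicator_const (hDm k), hωD k]
    _ = ∫⁻ x, (∑' k : ℕ, (D k).indicator
          (fun _ => ENNReal.ofReal (I.l ^ β / (A (k + 1)).l ^ (2 * β))) x) ∂ω' :=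
        (lintegral_tsum fun k => (measurable_const.indicator (hDm k)).aemeasurable).symm
    _ ≤ ∫⁻ x, ENNReal.ofReal C * kern x ∂ω' := lintegral_mono claim
    _ = ENNReal.ofReal C * ∫⁻ x, kern x ∂ω' :=
        lintegral_const_mul' _ _ ENNReal.ofReal_ne_top
    _ = ENNReal.ofReal C * reproPoisson α I.l I.center ω' := rfl
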